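/- Let G ⊆ D be abelian groups with D divisible. Let n be a positive integer and suppose |μ_n(D/G)| ≤ |μ_n(D)| < ∞, where μ_n(H) = {h ∈ H : h^n = 1}. Then |G/G^n| ≤ |μ_n(G)|, where G^n = {g^n : g ∈ G}. -/
import Mathlib


/-- Lemma `lm_herzog_inequ1`: if `G ⊆ D` with `D` divisible and
`|μ_n(D/G)| ≤ |μ_n(D)| < ∞`, then `|G/Gⁿ| ≤ |μ_n(G)|`. -/
theorem card_quotient_pow_le_card_torsion {D : Type*} [CommGroup D]
    (hdiv : ∀ d : D, ∀ n : ℕ, 0 < n → ∃ x : D, x ^ n = d)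
    (G : Subgroup D) (n : ℕ) (hn : 0 < n)
    (hfin : Finite {x : D | x ^ n = 1})
    (hle : Nat.card {x : D ⧸ G | x ^ n = 1} ≤ Nat.card {x : D | x ^ n = 1}) :
    Nat.card (G ⧸ (powMonoidHom n : G →* G).range) ≤ Nat.card {x : G | x ^ n = 1} := by
  classical
  set R := (powMonoidHom n : G →* G).range with hR
  set S : Subgroup D := Subgroup.comap (powMonoidHom n : D →* D) G with hS
  -- the map S → G, d ↦ d^n
  let f0 : S →* G :=
    { toFun := fun d => ⟨(d : D) ^ n, d.2⟩
      map_one' := by ext; simp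
      map_mul' := by intro a b; ext; simp [mul_pow] }
  let F : S →* G ⧸ R := (QuotientGroup.mk' R).comp f0
  have hFsurj : Function.Surjective F := by
    intro x
    obtain ⟨g, rfl⟩ := QuotientGroup.mk_surjective x
    obtain ⟨d, hd⟩ := hdiv (g : D) n hn
    have hdS : d ∈ S := by
      simp only [hS, Subgroup.mem_comap, powMonoidHom_apply, hd]
      exact g.2
    refine ⟨⟨d, hdS⟩, ?_⟩
    show QuotientGroup.mk (f0 ⟨d, hdS⟩) = QuotientGroup.mk g
    congr 1
    exact Subtype.ext hd
  set K : Subgroup S := F.ker with hK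
  set G' : Subgroup S := G.subgroupOf S with hG'
  have hG'K : G' ≤ K := by
    intro d hd
    have hdG : (d : D) ∈ G := hd
    show F d = 1
    show QuotientGroup.mk (f0 d) = 1
    rw [QuotientGroup.eq_one_iff]
    exact ⟨⟨(d : D), hdG⟩, rfl⟩
  -- equivalence G ⧸ R ≃ S ⧸ K
  have e1 : (S ⧸ K) ≃* (G ⧸ R) := QuotientGroup.quotientKerEquivOfSurjective F hFsurj
  -- the map φ : S →* μ_n(D⧸G)
  set TQ : Subgroup (D ⧸ G) := MonoidHom.ker (powMonoidHom n : (D ⧸ G) →* (D ⧸ G)) with hTQ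
  let φ : S →* TQ :=
    { toFun := fun d => ⟨QuotientGroup.mk (d : D), by
        simp only [hTQ, MonoidHom.mem_ker, powMonoidHom_apply, ← QuotientGroup.mk_pow]
        rw [QuotientGroup.eq_one_iff]
        exact d.2⟩
      map_one' := by ext; simp
      map_mul' := by intro a b; ext; simp }
  have hφsurj : Function.Surjective φ := by
    rintro ⟨x, hx⟩
    obtain ⟨d, rfl⟩ := QuotientGroup.mk_surjective x
    have hdS : d ∈ S := by
      simp only [hTQ, MonoidHom.mem_ker, powMonoidHom_apply, ← QuotientGroup.mk_pow,
        QuotientGroup.eq_one_iff] at hx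
      exact hx
    exact ⟨⟨d, hdS⟩, rfl⟩
  have hkerφ : φ.ker = G' := by
    ext d
    simp only [MonoidHom.mem_ker, hG', Subgroup.mem_subgroupOf]
    constructor
    · intro h
      have : QuotientGroup.mk (d : D) = (1 : D ⧸ G) := congrArg Subtype.val h
      rwa [QuotientGroup.eq_one_iff] at this
    · intro h
      exact Subtype.ext ((QuotientGroup.eq_one_iff _).2 h)
  have e2 : (S ⧸ G') ≃* TQ :=
    (QuotientGroup.quotientMulEquivOfEq hkerφ.symm).trans
      (QuotientGroup.quotientKerEquivOfSurjective φ hφsurj)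
  -- TD and ψ
  set TD : Subgroup D := MonoidHom.ker (powMonoidHom n : D →* D) with hTD
  have hTDS : TD ≤ S := by
    intro x hx
    simp only [hTD, MonoidHom.mem_ker, powMonoidHom_apply] at hx
    simp only [hS, Subgroup.mem_comap, powMonoidHom_apply, hx]
    exact G.one_mem
  set K' : Subgroup (S ⧸ G') := K.map (QuotientGroup.mk' G') with hK'
  let ψ : TD →* S ⧸ G' := (QuotientGroup.mk' G').comp (Subgroup.inclusion hTDS)
  have hrange : ψ.range = K' := by
    ext x
    constructor
    · rintro ⟨t, rfl⟩
      refine ⟨Subgroup.inclusion hTDS t, ?_, rfl⟩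
      show F _ = 1
      show QuotientGroup.mk (f0 _) = 1
      rw [QuotientGroup.eq_one_iff]
      refine ⟨1, ?_⟩
      have ht : (t : D) ^ n = 1 := t.2
      refine Subtype.ext ?_
      show (((1 : G) ^ n : G) : D) = (t : D) ^ n
      simp [ht]
    · rintro ⟨s, hsK, rfl⟩
      have : F s = 1 := hsK
      have : QuotientGroup.mk (f0 s) = (1 : G ⧸ R) := this
      rw [QuotientGroup.eq_one_iff] at this
      obtain ⟨g, hg⟩ := this
      have hg' : (g : D) ^ n = (s : D) ^ n := congrArg Subtype.val hg
      have htmem : (s : D) * (g : D)⁻¹ ∈ TD := by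
        simp only [hTD, MonoidHom.mem_ker, powMonoidHom_apply]
        rw [mul_pow, inv_pow, hg', mul_inv_cancel]
      refine ⟨⟨(s : D) * (g : D)⁻¹, htmem⟩, ?_⟩
      show QuotientGroup.mk (Subgroup.inclusion hTDS _) = QuotientGroup.mk s
      rw [QuotientGroup.eq]
      show (Subgroup.inclusion hTDS _)⁻¹ * s ∈ G'
      simp only [hG', Subgroup.mem_subgroupOf]
      show ((s : D) * (g : D)⁻¹)⁻¹ * (s : D) ∈ G
      have : ((s : D) * (g : D)⁻¹)⁻¹ * (s : D) = (g : D) := by group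
      rw [this]; exact g.2
  -- kernel of ψ ↔ μ_n(G)
  have hkerψ : Nat.card ψ.ker = Nat.card {x : G | x ^ n = 1} := by
    apply Nat.card_congr
    refine ⟨fun t => ⟨⟨(t : TD), ?_⟩, ?_⟩, fun x => ⟨⟨(x : G), ?_⟩, ?_⟩, ?_, ?_⟩
    · -- (t : D) ∈ G
      have := t.2
      simp only [MonoidHom.mem_ker] at this
      have : QuotientGroup.mk (Subgroup.inclusion hTDS (t : TD)) = (1 : S ⧸ G') := this
      rw [QuotientGroup.eq_one_iff] at this
      exact this
    · -- pow = 1 in G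
      have ht : ((t : TD) : D) ^ n = 1 := (t : TD).2
      exact Subtype.ext ht
    · -- x^n = 1 in D
      have hx : (x : G) ^ n = 1 := x.2
      have : ((x : G) : D) ^ n = 1 := congrArg Subtype.val hx
      exact this
    · -- in ker ψ
      show QuotientGroup.mk (Subgroup.inclusion hTDS _) = (1 : S ⧸ G')
      rw [QuotientGroup.eq_one_iff]
      show (((x : G) : D)) ∈ G
      exact (x : G).2
    · intro t; ext; rfl
    · intro x; ext; rfl
  -- finiteness and positivity of |TD|
  have eTD : Nat.card TD = Nat.card {x : D | x ^ n = 1} := by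
    apply Nat.card_congr
    exact Equiv.subtypeEquivRight (fun x => by simp [hTD, MonoidHom.mem_ker])
  have hTDfin : Finite TD := by
    have hmem : ∀ x : D, x ∈ TD ↔ x ^ n = 1 := fun x => by simp [hTD, MonoidHom.mem_ker]
    exact Finite.of_equiv {x : D | x ^ n = 1}
      (Equiv.subtypeEquivRight fun x => (hmem x).symm)
  have hTDpos : 0 < Nat.card TD := Nat.card_pos
  -- counting
  have h1 : Nat.card (S ⧸ G') = Nat.card ((S ⧸ G') ⧸ K') * Nat.card K' :=
    Subgroup.card_eq_card_quotient_mul_card_subgroup K'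
  have e3 : ((S ⧸ G') ⧸ K') ≃* (S ⧸ K) :=
    QuotientGroup.quotientQuotientEquivQuotient G' K hG'K
  have h2 : Nat.card ((S ⧸ G') ⧸ K') = Nat.card (G ⧸ R) :=
    Nat.card_congr (e3.trans e1).toEquiv
  have h3 : Nat.card TD = Nat.card (TD ⧸ ψ.ker) * Nat.card ψ.ker :=
    Subgroup.card_eq_card_quotient_mul_card_subgroup ψ.ker
  have h4 : Nat.card (TD ⧸ ψ.ker) = Nat.card K' := by
    rw [← hrange]
    exact Nat.card_congr (QuotientGroup.quotientKerEquivRange ψ).toEquiv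
  have eTQ : Nat.card (S ⧸ G') = Nat.card {x : D ⧸ G | x ^ n = 1} := by
    refine (Nat.card_congr e2.toEquiv).trans ?_
    apply Nat.card_congr
    exact Equiv.subtypeEquivRight (fun x => by simp [hTQ, MonoidHom.mem_ker])
  -- assemble
  have key : Nat.card (G ⧸ R) * Nat.card K' ≤ Nat.card K' * Nat.card {x : G | x ^ n = 1} := by
    calc Nat.card (G ⧸ R) * Nat.card K' = Nat.card (S ⧸ G') := by rw [h1, h2]
    _ = Nat.card {x : D ⧸ G | x ^ n = 1} := eTQ
    _ ≤ Nat.card {x : D | x ^ n = 1} := hle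
    _ = Nat.card TD := eTD.symm
    _ = Nat.card K' * Nat.card {x : G | x ^ n = 1} := by rw [h3, h4, hkerψ]
  have hK'pos : 0 < Nat.card K' := by
    rcases Nat.eq_zero_or_pos (Nat.card K') with h | h
    · rw [h3, h4, h, Nat.zero_mul] at hTDpos; omega
    · exact h
  exact Nat.le_of_mul_le_mul_right (key.trans_eq (mul_comm _ _)) hK'pos
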